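/- Let φ : [0,1] × [-1,1] → ℝ be continuous with φ(t,-1) < 0 and φ(t,1) > 0 for all t ∈ [0,1]. Then the zero set Z = φ⁻¹(0) has a connected component that intersects both {0} × [-1,1] and {1} × [-1,1]. -/

import Mathlib

open Set

namespace Stmt15

open Metric Finset

def qv : Bool × Bool → ℤ
  | (true, true) => 0
  | (false, true) => 1
  | (false, false) => 2
  | (true, false) => 3

def dl (a b : Bool × Bool) : ℤ := (qv b - qv a + 1).emod 4 - 1

def Opp (a b : Bool × Bool) : Prop := a.1 ≠ b.1 ∧ a.2 ≠ b.2

instance (a b : Bool × Bool) : Decidable (Opp a b) := inferInstanceAs (Decidable (_ ∧ _))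

lemma square_rule : ∀ a b c d : Bool × Bool,
    (¬ Opp a b ∧ ¬ Opp c d ∧ ¬ Opp a c ∧ ¬ Opp b d ∧ ¬ Opp a d ∧ ¬ Opp b c) →
    dl c d - dl a b = dl b d - dl a c := by decide

def fR (l : Bool × Bool) : ℤ := if l = (true, true) then 1 else 0
def fL (l : Bool × Bool) : ℤ := if l = (false, false) then 1 else 0
def fB (l : Bool × Bool) : ℤ := if l = (true, false) then 1 else 0
def fT (l : Bool × Bool) : ℤ := if l = (false, true) then 1 else 0

lemma tel_right : ∀ a b : Bool × Bool, a.1 = true → b.1 = true → dl a b = fR b - fR a := by decide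
lemma tel_left : ∀ a b : Bool × Bool, a.1 = false → b.1 = false → dl a b = fL b - fL a := by decide
lemma tel_bot : ∀ a b : Bool × Bool, a.2 = false → b.2 = false → dl a b = fB b - fB a := by decide
lemma tel_top : ∀ a b : Bool × Bool, a.2 = true → b.2 = true → dl a b = fT b - fT a := by decide

lemma sign_flip {a b : ℝ} (h : decide (0 ≤ a) ≠ decide (0 ≤ b)) : |a| ≤ |a - b| := by
  by_cases ha : 0 ≤ a
  · have hb : ¬ (0 ≤ b) := fun hb => h (by simp [ha, hb])
    push_neg at hb
    rw [abs_of_nonneg ha, abs_of_nonneg (by linarith : (0:ℝ) ≤ a - b)]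
    linarith
  · have hb : 0 ≤ b := by
      by_contra hb
      exact h (by simp [ha, hb])
    push_neg at ha
    rw [abs_of_neg ha, abs_of_nonpos (by linarith : a - b ≤ 0)]
    linarith

/-- Poincaré–Miranda theorem (strict boundary version) on `[0,1] × [-1,1]`. -/
lemma miranda (u v : ℝ × ℝ → ℝ)
    (hu : ContinuousOn u (Icc (0:ℝ) 1 ×ˢ Icc (-1:ℝ) 1))
    (hv : ContinuousOn v (Icc (0:ℝ) 1 ×ˢ Icc (-1:ℝ) 1))
    (huL : ∀ y ∈ Icc (-1:ℝ) 1, u (0, y) < 0)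
    (huR : ∀ y ∈ Icc (-1:ℝ) 1, 0 < u (1, y))
    (hvB : ∀ x ∈ Icc (0:ℝ) 1, v (x, -1) < 0)
    (hvT : ∀ x ∈ Icc (0:ℝ) 1, 0 < v (x, 1)) :
    ∃ q ∈ Icc (0:ℝ) 1 ×ˢ Icc (-1:ℝ) 1, u q = 0 ∧ v q = 0 := by
  by_contra hcon
  push_neg at hcon
  have hQc : IsCompact (Icc (0:ℝ) 1 ×ˢ Icc (-1:ℝ) 1) := isCompact_Icc.prod isCompact_Icc
  have hmc : ContinuousOn (fun q => max |u q| |v q|) (Icc (0:ℝ) 1 ×ˢ Icc (-1:ℝ) 1) :=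
    ContinuousOn.sup (ContinuousOn.abs hu) (ContinuousOn.abs hv)
  have hQne : (Icc (0:ℝ) 1 ×ˢ Icc (-1:ℝ) 1).Nonempty :=
    ⟨(0, -1), ⟨le_refl 0, zero_le_one⟩, ⟨le_refl (-1), by norm_num⟩⟩
  obtain ⟨q₀, hq₀Q, hq₀min⟩ := hQc.exists_isMinOn hQne hmc
  set c : ℝ := max |u q₀| |v q₀| with hcdef
  have hc : 0 < c := by
    rcases lt_or_eq_of_le (le_max_iff.mpr (Or.inl (abs_nonneg (u q₀))) : (0:ℝ) ≤ c) with h | h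
    · exact h
    · exfalso
      have h1 : |u q₀| ≤ 0 := h ▸ le_max_left _ _
      have h2 : |v q₀| ≤ 0 := h ▸ le_max_right _ _
      exact hcon q₀ hq₀Q (abs_nonpos_iff.mp h1) (abs_nonpos_iff.mp h2)
  have hmin : ∀ q ∈ Icc (0:ℝ) 1 ×ˢ Icc (-1:ℝ) 1, c ≤ max |u q| |v q| :=
    fun q hq => hq₀min hq
  obtain ⟨δ₁, hδ₁, hδ₁'⟩ := (Metric.uniformContinuousOn_iff.mp
    (hQc.uniformContinuousOn_of_continuous hu)) c hc
  obtain ⟨δ₂, hδ₂, hδ₂'⟩ := (Metric.uniformContinuousOn_iff.mp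
    (hQc.uniformContinuousOn_of_continuous hv)) c hc
  set δ : ℝ := min δ₁ δ₂ with hδdef
  have hδ : 0 < δ := lt_min hδ₁ hδ₂
  obtain ⟨n₀, hn₀⟩ := exists_nat_gt (2 / δ)
  set n : ℕ := n₀ + 1 with hndef
  have hnpos : (0:ℝ) < (n:ℝ) := by positivity
  have hnne : (n:ℝ) ≠ 0 := ne_of_gt hnpos
  have hmesh : 2 / (n:ℝ) < δ := by
    rw [div_lt_iff₀ hnpos]
    have h2 : 2 / δ < (n:ℝ) := lt_of_lt_of_le hn₀ (by exact_mod_cast Nat.le_succ n₀)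
    calc (2:ℝ) = (2/δ) * δ := by field_simp
    _ < (n:ℝ) * δ := mul_lt_mul_of_pos_right h2 hδ
    _ = δ * (n:ℝ) := mul_comm _ _
  set P : ℕ → ℕ → ℝ × ℝ := fun i j => ((i:ℝ)/(n:ℝ), -1 + 2*(j:ℝ)/(n:ℝ)) with hPdef
  have hPQ : ∀ i j : ℕ, i ≤ n → j ≤ n → P i j ∈ Icc (0:ℝ) 1 ×ˢ Icc (-1:ℝ) 1 := by
    intro i j hi hj
    have hi' : (i:ℝ) ≤ (n:ℝ) := by exact_mod_cast hi
    have hj' : (j:ℝ) ≤ (n:ℝ) := by exact_mod_cast hj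
    have hy2 : 2*(j:ℝ)/(n:ℝ) ≤ 2 := by rw [div_le_iff₀ hnpos]; nlinarith
    have hy0 : 0 ≤ 2*(j:ℝ)/(n:ℝ) := by positivity
    have hx1 : (i:ℝ)/(n:ℝ) ≤ 1 := by rw [div_le_one hnpos]; exact hi'
    refine ⟨⟨by positivity, hx1⟩, ⟨?_, ?_⟩⟩
    · show -1 ≤ -1 + 2*(j:ℝ)/(n:ℝ)
      linarith
    · show -1 + 2*(j:ℝ)/(n:ℝ) ≤ 1
      linarith
  have hPdist : ∀ i j i' j' : ℕ, i ≤ i' + 1 → i' ≤ i + 1 → j ≤ j' + 1 → j' ≤ j + 1 →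
      dist (P i j) (P i' j') < δ := by
    intro i j i' j' h1 h2 h3 h4
    have hii : |(i:ℝ) - (i':ℝ)| ≤ 1 := by
      have e1 : (i':ℝ) ≤ (i:ℝ) + 1 := by exact_mod_cast h2
      have e2 : (i:ℝ) ≤ (i':ℝ) + 1 := by exact_mod_cast h1
      rw [abs_le]; constructor <;> linarith
    have hjj : |(j:ℝ) - (j':ℝ)| ≤ 1 := by
      have e1 : (j':ℝ) ≤ (j:ℝ) + 1 := by exact_mod_cast h4
      have e2 : (j:ℝ) ≤ (j':ℝ) + 1 := by exact_mod_cast h3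
      rw [abs_le]; constructor <;> linarith
    rw [Prod.dist_eq]
    apply max_lt
    · rw [Real.dist_eq]
      have e : (i:ℝ)/(n:ℝ) - (i':ℝ)/(n:ℝ) = ((i:ℝ) - (i':ℝ))/(n:ℝ) := by ring
      show |(i:ℝ)/(n:ℝ) - (i':ℝ)/(n:ℝ)| < δ
      rw [e, abs_div, abs_of_pos hnpos]
      calc |(i:ℝ) - (i':ℝ)| / (n:ℝ) ≤ 2 / (n:ℝ) := by gcongr; linarith
        _ < δ := hmesh
    · rw [Real.dist_eq]
      have e : (-1 + 2*(j:ℝ)/(n:ℝ)) - (-1 + 2*(j':ℝ)/(n:ℝ)) = (2*((j:ℝ) - (j':ℝ)))/(n:ℝ) := by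
        ring
      show |(-1 + 2*(j:ℝ)/(n:ℝ)) - (-1 + 2*(j':ℝ)/(n:ℝ))| < δ
      rw [e, abs_div, abs_of_pos hnpos]
      calc |2*((j:ℝ) - (j':ℝ))| / (n:ℝ) ≤ 2 / (n:ℝ) := by
            gcongr
            rw [abs_mul]
            calc |(2:ℝ)| * |(j:ℝ) - (j':ℝ)| ≤ 2 * 1 := by
                  rw [abs_two]
                  exact mul_le_mul_of_nonneg_left hjj (by norm_num)
              _ = 2 := by norm_num
        _ < δ := hmesh
  set lab : ℕ → ℕ → Bool × Bool :=
    fun i j => (decide (0 ≤ u (P i j)), decide (0 ≤ v (P i j))) with hlabdef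
  have noOpp : ∀ i j i' j' : ℕ, i ≤ n → j ≤ n → i' ≤ n → j' ≤ n →
      i ≤ i' + 1 → i' ≤ i + 1 → j ≤ j' + 1 → j' ≤ j + 1 →
      ¬ Opp (lab i j) (lab i' j') := by
    intro i j i' j' hi hj hi' hj' h1 h2 h3 h4 hopp
    obtain ⟨o1, o2⟩ := hopp
    have hd := hPdist i j i' j' h1 h2 h3 h4
    have hud : |u (P i j) - u (P i' j')| < c := by
      have := hδ₁' _ (hPQ i j hi hj) _ (hPQ i' j' hi' hj')
        (lt_of_lt_of_le hd (min_le_left _ _))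
      rwa [Real.dist_eq] at this
    have hvd : |v (P i j) - v (P i' j')| < c := by
      have := hδ₂' _ (hPQ i j hi hj) _ (hPQ i' j' hi' hj')
        (lt_of_lt_of_le hd (min_le_right _ _))
      rwa [Real.dist_eq] at this
    have o1' : decide (0 ≤ u (P i j)) ≠ decide (0 ≤ u (P i' j')) := by
      simpa [hlabdef] using o1
    have o2' : decide (0 ≤ v (P i j)) ≠ decide (0 ≤ v (P i' j')) := by
      simpa [hlabdef] using o2
    have h1' : |u (P i j)| < c := lt_of_le_of_lt (sign_flip o1') hud
    have h2' : |v (P i j)| < c := lt_of_le_of_lt (sign_flip o2') hvd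
    have := hmin (P i j) (hPQ i j hi hj)
    rcases max_cases |u (P i j)| |v (P i j)| with ⟨he, _⟩ | ⟨he, _⟩ <;> rw [he] at this <;>
      linarith
  -- edge label facts
  have labR : ∀ j : ℕ, j ≤ n → (lab n j).1 = true := by
    intro j hj
    have hy := (hPQ n j le_rfl hj).2
    have hx : P n j = (1, -1 + 2*(j:ℝ)/(n:ℝ)) := by
      simp only [hPdef]
      rw [div_self hnne]
    simp only [hlabdef]
    apply decide_eq_true
    rw [hx]
    exact le_of_lt (huR _ (by rw [hx] at hy; exact hy))
  have labL : ∀ j : ℕ, j ≤ n → (lab 0 j).1 = false := by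
    intro j hj
    have hy := (hPQ 0 j (Nat.zero_le n) hj).2
    have hx : P 0 j = (0, -1 + 2*(j:ℝ)/(n:ℝ)) := by
      simp only [hPdef]
      norm_num
    simp only [hlabdef]
    apply decide_eq_false
    rw [hx]
    exact not_le.mpr (huL _ (by rw [hx] at hy; exact hy))
  have labB : ∀ i : ℕ, i ≤ n → (lab i 0).2 = false := by
    intro i hi
    have hy := (hPQ i 0 hi (Nat.zero_le n)).1
    have hx : P i 0 = ((i:ℝ)/(n:ℝ), -1) := by
      simp only [hPdef]
      norm_num
    simp only [hlabdef]
    apply decide_eq_false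
    rw [hx]
    exact not_le.mpr (hvB _ (by rw [hx] at hy; exact hy))
  have labT : ∀ i : ℕ, i ≤ n → (lab i n).2 = true := by
    intro i hi
    have hy := (hPQ i n hi le_rfl).1
    have hx : P i n = ((i:ℝ)/(n:ℝ), 1) := by
      simp only [hPdef]
      rw [mul_div_assoc, div_self hnne]
      norm_num
    simp only [hlabdef]
    apply decide_eq_true
    rw [hx]
    exact le_of_lt (hvT _ (by rw [hx] at hy; exact hy))
  -- the sums
  set W : ℕ → ℤ := fun j => ∑ i ∈ Finset.range n, dl (lab i j) (lab (i+1) j) with hWdef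
  have key : ∀ j : ℕ, j < n → W (j+1) - W j =
      dl (lab n j) (lab n (j+1)) - dl (lab 0 j) (lab 0 (j+1)) := by
    intro j hj
    have e1 : W (j+1) - W j = ∑ i ∈ range n,
        (dl (lab i (j+1)) (lab (i+1) (j+1)) - dl (lab i j) (lab (i+1) j)) := by
      rw [Finset.sum_sub_distrib]
    have e2 : ∀ i ∈ range n,
        dl (lab i (j+1)) (lab (i+1) (j+1)) - dl (lab i j) (lab (i+1) j)
        = dl (lab (i+1) j) (lab (i+1) (j+1)) - dl (lab i j) (lab i (j+1)) := by
      intro i hi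
      have hi' : i < n := Finset.mem_range.mp hi
      refine square_rule (lab i j) (lab (i+1) j) (lab i (j+1)) (lab (i+1) (j+1))
        ⟨?_, ?_, ?_, ?_, ?_, ?_⟩ <;>
        exact noOpp _ _ _ _ (by omega) (by omega) (by omega) (by omega)
          (by omega) (by omega) (by omega) (by omega)
    rw [e1, Finset.sum_congr rfl e2,
      Finset.sum_range_sub (fun i => dl (lab i j) (lab i (j+1)))]
  have main : W n - W 0 =
      (∑ j ∈ range n, dl (lab n j) (lab n (j+1)))
      - ∑ j ∈ range n, dl (lab 0 j) (lab 0 (j+1)) := by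
    calc W n - W 0 = ∑ j ∈ range n, (W (j+1) - W j) := (Finset.sum_range_sub W n).symm
      _ = ∑ j ∈ range n,
            (dl (lab n j) (lab n (j+1)) - dl (lab 0 j) (lab 0 (j+1))) :=
          Finset.sum_congr rfl fun j hj => key j (Finset.mem_range.mp hj)
      _ = _ := Finset.sum_sub_distrib _ _
  have hRsum : ∑ j ∈ range n, dl (lab n j) (lab n (j+1)) = fR (lab n n) - fR (lab n 0) := by
    rw [Finset.sum_congr rfl fun j hj =>
      tel_right _ _ (labR j (le_of_lt (Finset.mem_range.mp hj)))
        (labR (j+1) (Finset.mem_range.mp hj)),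
      Finset.sum_range_sub (fun j => fR (lab n j))]
  have hLsum : ∑ j ∈ range n, dl (lab 0 j) (lab 0 (j+1)) = fL (lab 0 n) - fL (lab 0 0) := by
    rw [Finset.sum_congr rfl fun j hj =>
      tel_left _ _ (labL j (le_of_lt (Finset.mem_range.mp hj)))
        (labL (j+1) (Finset.mem_range.mp hj)),
      Finset.sum_range_sub (fun j => fL (lab 0 j))]
  have hW0 : W 0 = fB (lab n 0) - fB (lab 0 0) := by
    show (∑ i ∈ Finset.range n, dl (lab i 0) (lab (i+1) 0)) = _
    rw [Finset.sum_congr rfl fun i hi =>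
      tel_bot _ _ (labB i (le_of_lt (Finset.mem_range.mp hi)))
        (labB (i+1) (Finset.mem_range.mp hi)),
      Finset.sum_range_sub (fun i => fB (lab i 0))]
  have hWn : W n = fT (lab n n) - fT (lab 0 n) := by
    show (∑ i ∈ Finset.range n, dl (lab i n) (lab (i+1) n)) = _
    rw [Finset.sum_congr rfl fun i hi =>
      tel_top _ _ (labT i (le_of_lt (Finset.mem_range.mp hi)))
        (labT (i+1) (Finset.mem_range.mp hi)),
      Finset.sum_range_sub (fun i => fT (lab i n))]
  -- corner labels
  have cornNN : lab n n = (true, true) :=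
    Prod.ext_iff.mpr ⟨labR n le_rfl, labT n le_rfl⟩
  have cornN0 : lab n 0 = (true, false) :=
    Prod.ext_iff.mpr ⟨labR 0 (Nat.zero_le n), labB n le_rfl⟩
  have corn0N : lab 0 n = (false, true) :=
    Prod.ext_iff.mpr ⟨labL n le_rfl, labT 0 (Nat.zero_le n)⟩
  have corn00 : lab 0 0 = (false, false) :=
    Prod.ext_iff.mpr ⟨labL 0 (Nat.zero_le n), labB 0 (Nat.zero_le n)⟩
  rw [hRsum, hLsum, hW0, hWn, cornNN, cornN0, corn0N, corn00] at main
  simp only [fR, fL, fB, fT] at main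
  norm_num at main

end Stmt15

open Metric in
theorem stmt_15 (φ : ℝ × ℝ → ℝ)
    (hφ : ContinuousOn φ (Icc (0:ℝ) 1 ×ˢ Icc (-1:ℝ) 1))
    (hbot : ∀ t ∈ Icc (0:ℝ) 1, φ (t, -1) < 0)
    (htop : ∀ t ∈ Icc (0:ℝ) 1, 0 < φ (t, 1)) :
    ∃ z ∈ {q ∈ Icc (0:ℝ) 1 ×ˢ Icc (-1:ℝ) 1 | φ q = 0},
      (∃ p ∈ connectedComponentIn {q ∈ Icc (0:ℝ) 1 ×ˢ Icc (-1:ℝ) 1 | φ q = 0} z,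
        p.1 = 0) ∧
      (∃ p ∈ connectedComponentIn {q ∈ Icc (0:ℝ) 1 ×ˢ Icc (-1:ℝ) 1 | φ q = 0} z,
        p.1 = 1) := by
  by_contra hcon
  push_neg at hcon
  set S : Set (ℝ × ℝ) := {q ∈ Icc (0:ℝ) 1 ×ˢ Icc (-1:ℝ) 1 | φ q = 0} with hSdef
  have hQc : IsCompact (Icc (0:ℝ) 1 ×ˢ Icc (-1:ℝ) 1) := isCompact_Icc.prod isCompact_Icc
  have hScl : IsClosed S := by
    have : S = (Icc (0:ℝ) 1 ×ˢ Icc (-1:ℝ) 1) ∩ φ ⁻¹' {0} := by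
      ext q; simp [hSdef]
    rw [this]
    exact hφ.preimage_isClosed_of_isClosed (isClosed_Icc.prod isClosed_Icc) isClosed_singleton
  have hSc : IsCompact S := hQc.of_isClosed_subset hScl (sep_subset _ _)
  haveI : CompactSpace ↥S := isCompact_iff_compactSpace.mp hSc
  -- the set of points of S over the right edge, as a subset of the subtype
  set B' : Set ↥S := {z : ↥S | (z : ℝ × ℝ).1 = 1} with hB'def
  have hB'cl : IsClosed B' :=
    isClosed_eq (continuous_fst.comp continuous_subtype_val) continuous_const
  have hB'c : IsCompact B' := hB'cl.isCompact
  -- every point over the left edge has a clopen neighbourhood avoiding B'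
  have key1 : ∀ a : ↥S, (a : ℝ × ℝ).1 = 0 →
      ∃ V : Set ↥S, IsClopen V ∧ a ∈ V ∧ V ∩ B' = ∅ := by
    intro a ha
    have hdisj : connectedComponent a ∩ B' = ∅ := by
      rw [eq_empty_iff_forall_notMem]
      rintro b ⟨hbc, hb1⟩
      have hmem : (a : ℝ × ℝ) ∈ S := a.2
      have himg : connectedComponentIn S (a : ℝ × ℝ) =
          Subtype.val '' connectedComponent a := by
        rw [connectedComponentIn_eq_image hmem]
      refine hcon (a : ℝ × ℝ) hmem ⟨(a : ℝ × ℝ), mem_connectedComponentIn hmem, ha⟩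
        ((b : ℝ × ℝ)) ?_ hb1
      rw [himg]
      exact mem_image_of_mem _ hbc
    set ι := {V : Set ↥S // IsClopen V ∧ a ∈ V} with hιdef
    haveI : Nonempty ι := ⟨⟨univ, isClopen_univ, mem_univ a⟩⟩
    have hinter : B' ∩ ⋂ i : ι, (i : Set ↥S) = ∅ := by
      rw [← connectedComponent_eq_iInter_isClopen a, inter_comm]
      exact hdisj
    obtain ⟨i, hi⟩ := hB'c.elim_directed_family_closed (fun i : ι => (i : Set ↥S))
      (fun i => i.2.1.1) hinter
      (fun i j => ⟨⟨(i : Set ↥S) ∩ j, i.2.1.inter j.2.1, i.2.2, j.2.2⟩,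
        inter_subset_left, inter_subset_right⟩)
    exact ⟨i, i.2.1, i.2.2, by rw [inter_comm]; exact hi⟩
  -- extract a clopen set containing all left-edge points of S, avoiding B'
  set A' : Set ↥S := {z : ↥S | (z : ℝ × ℝ).1 = 0} with hA'def
  have hA'cl : IsClosed A' :=
    isClosed_eq (continuous_fst.comp continuous_subtype_val) continuous_const
  have hA'c : IsCompact A' := hA'cl.isCompact
  have key1' : ∀ a : ↥A', ∃ V : Set ↥S, IsClopen V ∧ (a : ↥S) ∈ V ∧ V ∩ B' = ∅ :=
    fun a => key1 a a.2
  choose V hV1 hV2 hV3 using key1'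
  obtain ⟨t, ht⟩ := hA'c.elim_finite_subcover V (fun a => (hV1 a).2)
    (fun x hx => mem_iUnion.mpr ⟨⟨x, hx⟩, hV2 ⟨x, hx⟩⟩)
  set U : Set ↥S := ⋃ a ∈ t, V a with hUdef
  have hUclopen : IsClopen U := isClopen_biUnion_finset (fun a _ => hV1 a)
  have hAU : A' ⊆ U := ht
  have hUB : U ∩ B' = ∅ := by
    rw [eq_empty_iff_forall_notMem]
    rintro b ⟨hbU, hbB⟩
    obtain ⟨a, hat, hbV⟩ := mem_iUnion₂.mp hbU
    exact (eq_empty_iff_forall_notMem.mp (hV3 a)) b ⟨hbV, hbB⟩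
  -- transfer to subsets of the plane
  set Z₀ : Set (ℝ × ℝ) := Subtype.val '' U with hZ₀def
  set Z₁ : Set (ℝ × ℝ) := Subtype.val '' Uᶜ with hZ₁def
  have hZ₀c : IsCompact Z₀ := (hUclopen.1.isCompact).image continuous_subtype_val
  have hZ₁c : IsCompact Z₁ := (hUclopen.compl.1.isCompact).image continuous_subtype_val
  have hZ₀S : Z₀ ⊆ S := by rintro q ⟨z, _, rfl⟩; exact z.2
  have hZ₁S : Z₁ ⊆ S := by rintro q ⟨z, _, rfl⟩; exact z.2
  have hdisj01 : ∀ q, q ∈ Z₀ → q ∈ Z₁ → False := by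
    rintro q ⟨z, hz, rfl⟩ ⟨w, hw, hwz⟩
    rw [Subtype.val_injective hwz] at hw
    exact hw hz
  have hcover : ∀ q ∈ S, q ∈ Z₀ ∨ q ∈ Z₁ := by
    intro q hq
    by_cases h : (⟨q, hq⟩ : ↥S) ∈ U
    · exact Or.inl ⟨⟨q, hq⟩, h, rfl⟩
    · exact Or.inr ⟨⟨q, hq⟩, h, rfl⟩
  have hA0 : ∀ q ∈ S, q.1 = 0 → q ∈ Z₀ := by
    intro q hq h0
    exact ⟨⟨q, hq⟩, hAU h0, rfl⟩
  have hB1 : ∀ q ∈ S, q.1 = 1 → q ∈ Z₁ := by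
    intro q hq h1
    by_cases h : (⟨q, hq⟩ : ↥S) ∈ U
    · exfalso
      exact (eq_empty_iff_forall_notMem.mp hUB) ⟨q, hq⟩ ⟨h, h1⟩
    · exact ⟨⟨q, hq⟩, h, rfl⟩
  -- the horizontal test function
  set L : Set (ℝ × ℝ) := {p : ℝ × ℝ | p.1 = 0} with hLdef
  set R : Set (ℝ × ℝ) := {p : ℝ × ℝ | p.1 = 1} with hRdef
  have hLcl : IsClosed L := isClosed_eq continuous_fst continuous_const
  have hRcl : IsClosed R := isClosed_eq continuous_fst continuous_const
  have h0cl : IsClosed (Z₀ ∪ L) := hZ₀c.isClosed.union hLcl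
  have h1cl : IsClosed (Z₁ ∪ R) := hZ₁c.isClosed.union hRcl
  have h0ne : (Z₀ ∪ L).Nonempty := ⟨(0, 0), Or.inr rfl⟩
  have h1ne : (Z₁ ∪ R).Nonempty := ⟨(1, 0), Or.inr rfl⟩
  -- membership exclusions
  have hnot1 : ∀ p : ℝ × ℝ, p ∈ Z₀ ∪ L → p ∈ Z₁ ∪ R → False := by
    rintro p (hp | hp) (hq | hq)
    · exact hdisj01 p hp hq
    · -- p ∈ Z₀ and p.1 = 1
      exact hdisj01 p hp (hB1 p (hZ₀S hp) hq)
    · -- p.1 = 0 and p ∈ Z₁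
      exact hdisj01 p (hA0 p (hZ₁S hq) hp) hq
    · -- p.1 = 0 and p.1 = 1
      rw [hLdef] at hp; rw [hRdef] at hq
      simp only [mem_setOf_eq] at hp hq
      rw [hp] at hq; norm_num at hq
  set u : ℝ × ℝ → ℝ := fun q => infDist q (Z₀ ∪ L) - infDist q (Z₁ ∪ R) with hudef
  have hucont : ContinuousOn u (Icc (0:ℝ) 1 ×ˢ Icc (-1:ℝ) 1) :=
    ((continuous_infDist_pt (Z₀ ∪ L)).sub (continuous_infDist_pt (Z₁ ∪ R))).continuousOn
  have huL : ∀ y ∈ Icc (-1:ℝ) 1, u (0, y) < 0 := by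
    intro y _
    have m0 : ((0:ℝ), y) ∈ Z₀ ∪ L := Or.inr rfl
    have m1 : ((0:ℝ), y) ∉ Z₁ ∪ R := fun h => hnot1 _ m0 h
    have e0 : infDist ((0:ℝ), y) (Z₀ ∪ L) = 0 := infDist_zero_of_mem m0
    have e1 : 0 < infDist ((0:ℝ), y) (Z₁ ∪ R) := (h1cl.notMem_iff_infDist_pos h1ne).mp m1
    simp only [hudef]
    linarith
  have huR : ∀ y ∈ Icc (-1:ℝ) 1, 0 < u (1, y) := by
    intro y _
    have m1 : ((1:ℝ), y) ∈ Z₁ ∪ R := Or.inr rfl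
    have m0 : ((1:ℝ), y) ∉ Z₀ ∪ L := fun h => hnot1 _ h m1
    have e1 : infDist ((1:ℝ), y) (Z₁ ∪ R) = 0 := infDist_zero_of_mem m1
    have e0 : 0 < infDist ((1:ℝ), y) (Z₀ ∪ L) := (h0cl.notMem_iff_infDist_pos h0ne).mp m0
    simp only [hudef]
    linarith
  obtain ⟨q, hqQ, hq0, hqφ⟩ := Stmt15.miranda u φ hucont hφ huL huR hbot htop
  have hqS : q ∈ S := ⟨hqQ, hqφ⟩
  rcases hcover q hqS with hq | hq
  · have e0 : infDist q (Z₀ ∪ L) = 0 := infDist_zero_of_mem (Or.inl hq)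
    have e1 : infDist q (Z₁ ∪ R) = 0 := by
      simp only [hudef] at hq0
      linarith
    have : q ∈ Z₁ ∪ R := by
      by_contra h
      have := (h1cl.notMem_iff_infDist_pos h1ne).mp h
      linarith
    exact hnot1 q (Or.inl hq) this
  · have e1 : infDist q (Z₁ ∪ R) = 0 := infDist_zero_of_mem (Or.inl hq)
    have e0 : infDist q (Z₀ ∪ L) = 0 := by
      simp only [hudef] at hq0
      linarith
    have : q ∈ Z₀ ∪ L := by
      by_contra h
      have := (h0cl.notMem_iff_infDist_pos h0ne).mp h
      linarith
    exact hnot1 q this (Or.inl hq)
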